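/- Let n ≥ 1 and let f_i : ℝ^d → ℝ (i = 1, …, n) be differentiable functions each with L-Lipschitz gradient, set f := (1/n)·∑_{i=1}^n f_i, and let w* ∈ ℝ^d satisfy ∇f(w*) = 0. Then for all w, w̃ ∈ ℝ^d, (1/n)·∑_{i=1}^n ‖∇f_i(w) − ∇f_i(w̃) + ∇f(w̃)‖² ≤ 2L²‖w − w*‖² + 2L²‖w̃ − w*‖². -/

import Mathlib

lemma var_ineq {E : Type*} [NormedAddCommGroup E] [InnerProductSpace ℝ E]
    {n : ℕ} (x : Fin n → E) (xbar : E) (h : (n : ℝ) • xbar = ∑ i, x i) :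
    ∑ i, ‖xbar - x i‖ ^ 2 ≤ ∑ i, ‖x i‖ ^ 2 := by
  have expand : ∀ i, ‖xbar - x i‖ ^ 2 =
      ‖xbar‖ ^ 2 - 2 * inner ℝ xbar (x i) + ‖x i‖ ^ 2 := by
    intro i
    rw [norm_sub_sq_real]
    try ring
  calc ∑ i, ‖xbar - x i‖ ^ 2
      = (n : ℝ) * ‖xbar‖ ^ 2 - 2 * inner ℝ xbar (∑ i, x i) + ∑ i, ‖x i‖ ^ 2 := by
        simp_rw [expand, Finset.sum_add_distrib, Finset.sum_sub_distrib, Finset.sum_const,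
          Finset.card_univ, Fintype.card_fin, nsmul_eq_mul, ← Finset.mul_sum,
          inner_sum (𝕜 := ℝ)]
        try ring
    _ = ∑ i, ‖x i‖ ^ 2 - (n : ℝ) * ‖xbar‖ ^ 2 := by
        rw [← h, real_inner_smul_right, real_inner_self_eq_norm_sq]
        ring
    _ ≤ ∑ i, ‖x i‖ ^ 2 := by
        nlinarith [sq_nonneg ‖xbar‖, Nat.cast_nonneg (α := ℝ) n]

lemma sq_split {E : Type*} [NormedAddCommGroup E] (u v : E) :
    ‖u + v‖ ^ 2 ≤ 2 * ‖u‖ ^ 2 + 2 * ‖v‖ ^ 2 := by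
  have h1 : ‖u + v‖ ≤ ‖u‖ + ‖v‖ := norm_add_le u v
  have h2 : ‖u + v‖ ^ 2 ≤ (‖u‖ + ‖v‖) ^ 2 :=
    pow_le_pow_left₀ (norm_nonneg _) h1 2
  nlinarith [sq_nonneg (‖u‖ - ‖v‖)]

lemma sq_of_le {a b : ℝ} (ha : 0 ≤ a) (h : a ≤ b) : a ^ 2 ≤ b ^ 2 := by
  nlinarith

theorem stmt_10 (d n : ℕ) (hn : 1 ≤ n) (L : ℝ) (hL : 0 ≤ L)
    (f : Fin n → EuclideanSpace ℝ (Fin d) → ℝ)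
    (hdiff : ∀ i, Differentiable ℝ (f i))
    (hlip : ∀ i (w w' : EuclideanSpace ℝ (Fin d)),
      ‖gradient (f i) w - gradient (f i) w'‖ ≤ L * ‖w - w'‖)
    (F : EuclideanSpace ℝ (Fin d) → ℝ) (hF : F = fun w => (1 / n : ℝ) * ∑ i, f i w)
    (wstar : EuclideanSpace ℝ (Fin d)) (hstat : gradient F wstar = 0) :
    ∀ w wt : EuclideanSpace ℝ (Fin d),
      (1 / n : ℝ) * ∑ i, ‖gradient (f i) w - gradient (f i) wt + gradient F wt‖ ^ 2 ≤
        2 * L ^ 2 * ‖w - wstar‖ ^ 2 + 2 * L ^ 2 * ‖wt - wstar‖ ^ 2 := by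
  have hnpos : (0 : ℝ) < n := by exact_mod_cast hn
  have hgradF : ∀ x : EuclideanSpace ℝ (Fin d),
      gradient F x = (1 / n : ℝ) • ∑ i, gradient (f i) x := by
    intro x
    have hsum : HasFDerivAt (fun w : EuclideanSpace ℝ (Fin d) => ∑ i, f i w)
        (∑ i, InnerProductSpace.toDual ℝ (EuclideanSpace ℝ (Fin d)) (gradient (f i) x)) x :=
      HasFDerivAt.fun_sum fun i _ => ((hdiff i x).hasGradientAt).hasFDerivAt
    have hfd : HasFDerivAt F
        ((1 / n : ℝ) • ∑ i, InnerProductSpace.toDual ℝ (EuclideanSpace ℝ (Fin d))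
          (gradient (f i) x)) x := by
      rw [hF]
      simpa [smul_eq_mul, Pi.smul_def] using hsum.const_smul (1 / n : ℝ)
    have hg : HasGradientAt F ((1 / n : ℝ) • ∑ i, gradient (f i) x) x := by
      rw [hasGradientAt_iff_hasFDerivAt, map_smul, map_sum]
      exact hfd
    exact hg.gradient
  intro w wt
  set x : Fin n → EuclideanSpace ℝ (Fin d) :=
    fun i => gradient (f i) wt - gradient (f i) wstar with hx
  have hxbar : (n : ℝ) • gradient F wt = ∑ i, x i := by
    have h1 := hgradF wt
    have h2 := hgradF wstar
    have h2' : ∑ i, gradient (f i) wstar = 0 := by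
      have h3 : (1 / n : ℝ) • ∑ i, gradient (f i) wstar = 0 := by rw [← h2, hstat]
      have hne : (1 / n : ℝ) ≠ 0 := by positivity
      exact (smul_eq_zero.mp h3).resolve_left hne
    rw [hx]
    simp only [Finset.sum_sub_distrib, h2', sub_zero, h1, smul_smul]
    rw [mul_one_div, div_self (ne_of_gt hnpos), one_smul]
  have hterm : ∀ i, ‖gradient (f i) w - gradient (f i) wt + gradient F wt‖ ^ 2 ≤
      2 * ‖gradient (f i) w - gradient (f i) wstar‖ ^ 2 + 2 * ‖gradient F wt - x i‖ ^ 2 := by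
    intro i
    have heq : gradient (f i) w - gradient (f i) wt + gradient F wt =
        (gradient (f i) w - gradient (f i) wstar) + (gradient F wt - x i) := by
      rw [hx]; beta_reduce; abel
    rw [heq]
    exact sq_split _ _
  have hvar : ∑ i, ‖gradient F wt - x i‖ ^ 2 ≤ ∑ i, ‖x i‖ ^ 2 := var_ineq x _ hxbar
  have hsum1 : ∑ i, ‖gradient (f i) w - gradient (f i) wstar‖ ^ 2 ≤
      ∑ _i : Fin n, L ^ 2 * ‖w - wstar‖ ^ 2 := by
    apply Finset.sum_le_sum
    intro i _
    have h := sq_of_le (norm_nonneg _) (hlip i w wstar)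
    calc ‖gradient (f i) w - gradient (f i) wstar‖ ^ 2 ≤ (L * ‖w - wstar‖) ^ 2 := h
      _ = L ^ 2 * ‖w - wstar‖ ^ 2 := by ring
  have hsum2 : ∑ i, ‖x i‖ ^ 2 ≤ ∑ _i : Fin n, L ^ 2 * ‖wt - wstar‖ ^ 2 := by
    apply Finset.sum_le_sum
    intro i _
    have h := sq_of_le (norm_nonneg _) (hlip i wt wstar)
    calc ‖x i‖ ^ 2 = ‖gradient (f i) wt - gradient (f i) wstar‖ ^ 2 := by rw [hx]
      _ ≤ (L * ‖wt - wstar‖) ^ 2 := h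
      _ = L ^ 2 * ‖wt - wstar‖ ^ 2 := by ring
  have hmain : ∑ i, ‖gradient (f i) w - gradient (f i) wt + gradient F wt‖ ^ 2 ≤
      2 * (n : ℝ) * (L ^ 2 * ‖w - wstar‖ ^ 2) + 2 * (n : ℝ) * (L ^ 2 * ‖wt - wstar‖ ^ 2) := by
    calc ∑ i, ‖gradient (f i) w - gradient (f i) wt + gradient F wt‖ ^ 2
        ≤ ∑ i, (2 * ‖gradient (f i) w - gradient (f i) wstar‖ ^ 2 +
            2 * ‖gradient F wt - x i‖ ^ 2) := Finset.sum_le_sum fun i _ => hterm i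
      _ = 2 * ∑ i, ‖gradient (f i) w - gradient (f i) wstar‖ ^ 2 +
            2 * ∑ i, ‖gradient F wt - x i‖ ^ 2 := by
          rw [Finset.sum_add_distrib, ← Finset.mul_sum, ← Finset.mul_sum]
      _ ≤ 2 * ∑ _i : Fin n, L ^ 2 * ‖w - wstar‖ ^ 2 +
            2 * ∑ _i : Fin n, L ^ 2 * ‖wt - wstar‖ ^ 2 := by
          have h4 := le_trans hvar hsum2
          have h5 := hsum1
          apply add_le_add <;> linarith
      _ = 2 * (n : ℝ) * (L ^ 2 * ‖w - wstar‖ ^ 2) + 2 * (n : ℝ) * (L ^ 2 * ‖wt - wstar‖ ^ 2) := by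
          simp only [Finset.sum_const, Finset.card_univ, Fintype.card_fin, nsmul_eq_mul]
          ring
  rw [div_mul_eq_mul_div, one_mul, div_le_iff₀ hnpos]
  calc ∑ i, ‖gradient (f i) w - gradient (f i) wt + gradient F wt‖ ^ 2
      ≤ 2 * (n:ℝ) * (L ^ 2 * ‖w - wstar‖ ^ 2) + 2 * (n:ℝ) * (L ^ 2 * ‖wt - wstar‖ ^ 2) := hmain
    _ = (2 * L ^ 2 * ‖w - wstar‖ ^ 2 + 2 * L ^ 2 * ‖wt - wstar‖ ^ 2) * n := by ring
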